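/- With X normal Hausdorff and Y ⊆ C_b(X) a Banach space with ‖·‖ ≥ ‖·‖_∞ satisfying (H): for every bounded below lower semicontinuous f with nonempty domain and every φ ∈ Y, F(f − φ) = F(f) − φ̂, where φ̂(Q) := Q(φ). In particular F(φ) = φ̂ on the weak*-closed convex hull of Δ_Y(X) and +∞ outside. -/

import Mathlib

open BoundedContinuousFunction

/-- The transform `F(f)(Q) = sup_{ψ ∈ Y} (Q(ψ) − f^×(ψ))`. -/
noncomputable def FTransform {X : Type*} [TopologicalSpace X]
    {Y : Type*} [NormedAddCommGroup Y] [NormedSpace ℝ Y]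
    (j : Y →ₗ[ℝ] (X →ᵇ ℝ)) (f : X → EReal) (Q : WeakDual ℝ Y) : EReal :=
  ⨆ ψ : Y, ((Q ψ : EReal) - ⨆ x : X, ((j ψ x : EReal) - f x))

section Aux

lemma ereal_sub_sub (a b : ℝ) (c : EReal) (hc : c ≠ ⊥) :
    (a : EReal) - (c - (b : EReal)) = (((a + b : ℝ)) : EReal) - c := by
  induction c with
  | bot => exact absurd rfl hc
  | coe c => norm_cast; ring
  | top => simp [EReal.top_sub_coe, EReal.sub_top]

lemma ereal_iSup_sub {ι : Sort*} [Nonempty ι] (g : ι → EReal) (c : ℝ) :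
    ⨆ i, (g i - (c : EReal)) = (⨆ i, g i) - (c : EReal) := by
  apply le_antisymm
  · exact iSup_le fun i => EReal.sub_le_sub (le_iSup g i) le_rfl
  · rw [EReal.sub_le_iff_le_add (Or.inl (EReal.coe_ne_bot c)) (Or.inl (EReal.coe_ne_top c))]
    refine iSup_le fun i => ?_
    rw [← EReal.sub_le_iff_le_add (Or.inl (EReal.coe_ne_bot c)) (Or.inl (EReal.coe_ne_top c))]
    exact le_iSup (fun i => g i - (c : EReal)) i

lemma ereal_coe_iSup {ι : Sort*} [Nonempty ι] (g : ι → ℝ) (hb : BddAbove (Set.range g)) :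
    (⨆ i, (g i : EReal)) = (((⨆ i, g i : ℝ)) : EReal) :=
  (Monotone.map_ciSup_of_continuousAt (continuous_coe_real_ereal.continuousAt)
    EReal.coe_strictMono.monotone hb).symm

/-- Evaluation of weak-* dual elements, as a linear map. -/
noncomputable def evalWD {Y : Type*} [NormedAddCommGroup Y] [NormedSpace ℝ Y] :
    Y →ₗ[ℝ] (WeakDual ℝ Y →ₗ[ℝ] ℝ) :=
  { toFun := fun ψ =>
      { toFun := fun P => P ψ
        map_add' := fun P P' => rfl
        map_smul' := fun c P => rfl }
    map_add' := fun a b => by ext P; exact map_add P a b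
    map_smul' := fun c a => by ext P; exact map_smul P c a }

@[simp] lemma evalWD_apply {Y : Type*} [NormedAddCommGroup Y] [NormedSpace ℝ Y]
    (ψ : Y) (P : WeakDual ℝ Y) : evalWD ψ P = P ψ := rfl

/-- Every continuous linear functional on the weak-* dual is an evaluation. -/
lemma weakDual_dual_eval {Y : Type*} [NormedAddCommGroup Y] [NormedSpace ℝ Y]
    (L : WeakDual ℝ Y →L[ℝ] ℝ) : ∃ ψ : Y, ∀ P : WeakDual ℝ Y, L P = P ψ := by
  classical
  set B := topDualPairing ℝ Y with hB
  have hw := B.weakBilin_withSeminorms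
  let q : Seminorm ℝ (WeakDual ℝ Y) := (normSeminorm ℝ ℝ).comp (L : WeakDual ℝ Y →ₗ[ℝ] ℝ)
  have hq : Continuous q := by
    have : (q : WeakDual ℝ Y → ℝ) = fun P => ‖L P‖ := rfl
    rw [this]
    exact continuous_norm.comp L.continuous
  obtain ⟨s, C, hC0, hle⟩ := Seminorm.bound_of_continuous hw q hq
  have hker : ⨅ i : s, LinearMap.ker (evalWD (i : Y)) ≤
      LinearMap.ker (L : WeakDual ℝ Y →ₗ[ℝ] ℝ) := by
    intro P hP
    simp only [Submodule.mem_iInf, LinearMap.mem_ker] at hP ⊢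
    have h0 : (s.sup B.toSeminormFamily) P ≤ 0 := by
      refine Seminorm.finset_sup_apply_le le_rfl fun i hi => ?_
      have hPi : P i = 0 := hP ⟨i, hi⟩
      simp [LinearMap.toSeminormFamily_apply, hB, topDualPairing_apply, hPi]
      show ‖P i‖ ≤ 0; simp [hPi]
    have hq0 : q P ≤ 0 := by
      have h1 := hle P
      simp only [Seminorm.smul_apply] at h1
      calc q P ≤ (C : ℝ) • (s.sup B.toSeminormFamily) P := h1
        _ ≤ 0 := by
            have hC : (0:ℝ) ≤ (C:ℝ) := C.2
            simpa [smul_eq_mul] using mul_nonpos_of_nonneg_of_nonpos hC h0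
    have : ‖L P‖ ≤ 0 := hq0
    simpa using le_antisymm this (norm_nonneg _)
  have hmem : (L : WeakDual ℝ Y →ₗ[ℝ] ℝ) ∈
      Submodule.span ℝ (Set.range fun i : s => evalWD (i : Y)) :=
    mem_span_of_iInf_ker_le_ker hker
  obtain ⟨c, hc⟩ := (Submodule.mem_span_range_iff_exists_fun ℝ).1 hmem
  refine ⟨∑ i : s, c i • (i : Y), fun P => ?_⟩
  have h2 := congrArg (fun (T : WeakDual ℝ Y →ₗ[ℝ] ℝ) => T P) hc
  simp only [LinearMap.coe_sum, Finset.sum_apply, LinearMap.smul_apply] at h2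
  rw [← ContinuousLinearMap.coe_coe L, ← h2]
  simp [map_sum, map_smul, smul_eq_mul]

end Aux

theorem FTransform_sub_continuous
    {X : Type*} [TopologicalSpace X] [T2Space X] [NormalSpace X]
    (Y : Type*) [NormedAddCommGroup Y] [NormedSpace ℝ Y] [CompleteSpace Y]
    (j : Y →ₗ[ℝ] (X →ᵇ ℝ)) (hj : Function.Injective j)
    (hnorm : ∀ ψ : Y, ‖j ψ‖ ≤ ‖ψ‖)
    (hH : ∀ x : X, ∀ U : Set X, IsOpen U → x ∈ U →
      ∃ σ : Y, (∀ y, j σ y ∈ Set.Icc (0 : ℝ) 1) ∧ j σ x = 1 ∧ ∀ y ∉ U, j σ y = 0)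
    (f : X → EReal) (hf : LowerSemicontinuous f)
    (hbdd : ∃ m : ℝ, ∀ x, (m : EReal) ≤ f x) (hdom : ∃ x, f x ≠ ⊤)
    (φ : Y) :
    (∀ Q : WeakDual ℝ Y,
      FTransform j (fun x => f x - (j φ x : EReal)) Q = FTransform j f Q - (Q φ : EReal)) ∧
    ∃ Δ : X → WeakDual ℝ Y, (∀ (x : X) (ψ : Y), Δ x ψ = j ψ x) ∧
      (∀ Q ∈ closure (convexHull ℝ (Set.range Δ)),
        FTransform j (fun x => ((j φ x : ℝ) : EReal)) Q = (Q φ : EReal)) ∧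
      (∀ Q : WeakDual ℝ Y, Q ∉ closure (convexHull ℝ (Set.range Δ)) →
        FTransform j (fun x => ((j φ x : ℝ) : EReal)) Q = ⊤) := by
  classical
  obtain ⟨m, hm⟩ := hbdd
  obtain ⟨x₀, hx₀⟩ := hdom
  have hX : Nonempty X := ⟨x₀⟩
  have hev : ∀ (ψ : Y) (x : X), j ψ x ≤ ‖ψ‖ := fun ψ x =>
    (le_abs_self _).trans (le_trans (by rw [← Real.norm_eq_abs]; exact (j ψ).norm_coe_le_norm x)
      (hnorm ψ))
  constructor
  · -- Part 1
    have hfbot : ∀ x, f x ≠ ⊥ := by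
      intro x hx
      have := hm x
      rw [hx, le_bot_iff] at this
      exact (EReal.coe_ne_bot m) this
    have hr₀ : f x₀ = ((f x₀).toReal : EReal) := (EReal.coe_toReal hx₀ (hfbot x₀)).symm
    have hfs_top : ∀ ψ : Y, (⨆ x, ((j ψ x : EReal) - f x)) ≠ ⊤ := by
      intro ψ h
      have hle : (⨆ x, ((j ψ x : EReal) - f x)) ≤ ((‖ψ‖ - m : ℝ) : EReal) := by
        refine iSup_le fun x => ?_
        rw [EReal.coe_sub]
        exact EReal.sub_le_sub (EReal.coe_le_coe_iff.2 (hev ψ x)) (hm x)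
      rw [h, top_le_iff] at hle
      exact (EReal.coe_ne_top _) hle
    have hfs_bot : ∀ ψ : Y, (⨆ x, ((j ψ x : EReal) - f x)) ≠ ⊥ := by
      intro ψ h
      have hle : ((j ψ x₀ - (f x₀).toReal : ℝ) : EReal) ≤ ⨆ x, ((j ψ x : EReal) - f x) := by
        have he : ((j ψ x₀ : EReal) - f x₀) = ((j ψ x₀ - (f x₀).toReal : ℝ) : EReal) := by
          rw [hr₀]; norm_cast
        rw [← he]
        exact le_iSup (fun x => (j ψ x : EReal) - f x) x₀
      rw [h, le_bot_iff] at hle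
      exact (EReal.coe_ne_bot _) hle
    set R : Y → ℝ := fun ψ => (⨆ x, ((j ψ x : EReal) - f x)).toReal with hRdef
    have hR : ∀ ψ : Y, (⨆ x, ((j ψ x : EReal) - f x)) = ((R ψ : ℝ) : EReal) :=
      fun ψ => (EReal.coe_toReal (hfs_top ψ) (hfs_bot ψ)).symm
    intro Q
    simp only [FTransform]
    have e1 : ∀ ψ : Y, ((Q ψ : EReal) - ⨆ x, ((j ψ x : EReal) - (f x - (j φ x : EReal)))) =
        (fun χ : Y => ((Q (χ - φ) : EReal) - ⨆ x, ((j χ x : EReal) - f x)))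
          ((Equiv.addRight φ) ψ) := by
      intro ψ
      simp only [Equiv.coe_addRight, add_sub_cancel_right]
      congr 1
      refine iSup_congr fun x => ?_
      rw [ereal_sub_sub _ _ _ (hfbot x)]
      congr 2
      simp
    calc (⨆ ψ : Y, ((Q ψ : EReal) - ⨆ x, ((j ψ x : EReal) - (f x - (j φ x : EReal)))))
        = ⨆ ψ : Y, (fun χ : Y => ((Q (χ - φ) : EReal) - ⨆ x, ((j χ x : EReal) - f x)))
            ((Equiv.addRight φ) ψ) := iSup_congr e1
      _ = ⨆ χ : Y, ((Q (χ - φ) : EReal) - ⨆ x, ((j χ x : EReal) - f x)) :=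
            Equiv.iSup_comp (g := fun χ : Y => ((Q (χ - φ) : EReal) - ⨆ x, ((j χ x : EReal) - f x))) (Equiv.addRight φ)
      _ = ⨆ χ : Y, (((Q χ : EReal) - ⨆ x, ((j χ x : EReal) - f x)) - ((Q φ : ℝ) : EReal)) := by
            refine iSup_congr fun χ => ?_
            rw [hR, map_sub]
            norm_cast
            ring
      _ = (⨆ χ : Y, ((Q χ : EReal) - ⨆ x, ((j χ x : EReal) - f x))) - ((Q φ : ℝ) : EReal) :=
            ereal_iSup_sub _ _
  · -- Part 2
    let e : X → (Y →ₗ[ℝ] ℝ) := fun x =>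
      { toFun := fun ψ => j ψ x
        map_add' := fun a b => by simp
        map_smul' := fun c a => by simp }
    let Δ : X → WeakDual ℝ Y := fun x =>
      LinearMap.mkContinuous (e x) 1 (fun ψ => by
        rw [one_mul]
        exact ((j ψ).norm_coe_le_norm x).trans (hnorm ψ))
    have hΔ : ∀ (x : X) (ψ : Y), Δ x ψ = j ψ x := fun x ψ => rfl
    have hbdd2 : ∀ χ : Y, BddAbove (Set.range fun x => j χ x) := by
      intro χ
      exact ⟨‖χ‖, by rintro _ ⟨x, rfl⟩; exact hev χ x⟩
    set r : Y → ℝ := fun χ => ⨆ x, j χ x with hrdef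
    have hfs2 : ∀ ψ : Y, (⨆ x, ((j ψ x : EReal) - ((j φ x : ℝ) : EReal))) =
        ((r (ψ - φ) : ℝ) : EReal) := by
      intro ψ
      have he : ∀ x, ((j ψ x : EReal) - ((j φ x : ℝ) : EReal)) = ((j (ψ - φ) x : ℝ) : EReal) := by
        intro x
        rw [map_sub]
        norm_cast
      rw [iSup_congr he, ereal_coe_iSup _ (hbdd2 (ψ - φ))]
    have hterm : ∀ (Q : WeakDual ℝ Y) (ψ : Y),
        ((Q ψ : EReal) - ⨆ x, ((j ψ x : EReal) - ((j φ x : ℝ) : EReal))) =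
          ((Q ψ - r (ψ - φ) : ℝ) : EReal) := by
      intro Q ψ
      rw [hfs2 ψ]
      norm_cast
    have hr0 : r 0 = 0 := by
      have : (fun x : X => j (0 : Y) x) = fun _ : X => (0 : ℝ) := by
        funext x; simp
      rw [hrdef]
      simp only [this]
      exact ciSup_const
    have hKle : ∀ Q ∈ closure (convexHull ℝ (Set.range Δ)), ∀ χ : Y, Q χ ≤ r χ := by
      intro Q hQ χ
      have hsub : closure (convexHull ℝ (Set.range Δ)) ⊆
          (evalWD χ) ⁻¹' (Set.Iic (r χ)) := by
        apply closure_minimal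
        · apply convexHull_min
          · rintro _ ⟨x, rfl⟩
            exact le_ciSup (hbdd2 χ) x
          · exact (convex_Iic (r χ)).linear_preimage (evalWD χ)
        · have hc : Continuous fun P : WeakDual ℝ Y => P χ := WeakDual.eval_continuous χ
          exact (isClosed_Iic).preimage hc
      exact hsub hQ
    refine ⟨Δ, hΔ, ?_, ?_⟩
    · intro Q hQ
      simp only [FTransform]
      apply le_antisymm
      · refine iSup_le fun ψ => ?_
        rw [hterm Q ψ]
        refine EReal.coe_le_coe_iff.2 ?_
        have h1 : Q ψ - Q φ ≤ r (ψ - φ) := by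
          have := hKle Q hQ (ψ - φ)
          rwa [map_sub] at this
        linarith
      · have he : ((Q φ : ℝ) : EReal) =
            ((Q φ : EReal) - ⨆ x, ((j φ x : EReal) - ((j φ x : ℝ) : EReal))) := by
          rw [hterm Q φ, sub_self, hr0, sub_zero]
        rw [he]
        exact le_iSup (fun ψ => ((Q ψ : EReal) - ⨆ x, ((j ψ x : EReal) - ((j φ x : ℝ) : EReal)))) φ
    · intro Q hQ
      have hconv : Convex ℝ (closure (convexHull ℝ (Set.range Δ))) :=
        (convex_convexHull ℝ _).closure
      haveI : LocallyConvexSpace ℝ (WeakDual ℝ Y) :=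
        WeakBilin.locallyConvexSpace (B := topDualPairing ℝ Y)
      obtain ⟨L, u, hLK, hLQ⟩ := geometric_hahn_banach_closed_point hconv isClosed_closure hQ
      obtain ⟨ψ₀, hψ₀⟩ := weakDual_dual_eval L
      have hru : r ψ₀ ≤ u := by
        refine ciSup_le fun x => ?_
        have hx : Δ x ∈ closure (convexHull ℝ (Set.range Δ)) :=
          subset_closure (subset_convexHull ℝ _ (Set.mem_range_self x))
        have h2 := hLK _ hx
        rw [hψ₀] at h2
        exact le_of_lt h2
      have hQψ₀ : u < Q ψ₀ := by rw [← hψ₀]; exact hLQ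
      have hε : (0:ℝ) < Q ψ₀ - u := by linarith
      simp only [FTransform]
      refine iSup_eq_top.2 fun b hb => ?_
      obtain ⟨M, hM⟩ : ∃ M : ℝ, b < (M : EReal) := by
        induction b with
        | bot => exact ⟨0, bot_lt_iff_ne_bot.2 (by simp)⟩
        | coe b => exact ⟨b + 1, by exact_mod_cast lt_add_one b⟩
        | top => exact absurd hb (lt_irrefl _)
      set t : ℝ := max 0 ((M + 1 - Q φ) / (Q ψ₀ - u)) with htdef
      have ht0 : 0 ≤ t := le_max_left _ _
      have ht1 : (M + 1 - Q φ) / (Q ψ₀ - u) ≤ t := le_max_right _ _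
      have ht2 : M + 1 - Q φ ≤ t * (Q ψ₀ - u) := by
        rw [div_le_iff₀ hε] at ht1
        linarith
      refine ⟨φ + t • ψ₀, ?_⟩
      rw [hterm Q (φ + t • ψ₀), add_sub_cancel_left]
      refine lt_of_lt_of_le hM (EReal.coe_le_coe_iff.2 ?_)
      have hrt : r (t • ψ₀) ≤ t * u := by
        refine ciSup_le fun x => ?_
        have : j (t • ψ₀) x = t * j ψ₀ x := by simp
        rw [this]
        have hx : j ψ₀ x ≤ u := le_trans (le_ciSup (hbdd2 ψ₀) x) hru
        exact mul_le_mul_of_nonneg_left hx ht0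
      have hQt : Q (φ + t • ψ₀) = Q φ + t * Q ψ₀ := by
        rw [map_add, map_smul]
        rfl
      rw [hQt]
      nlinarith
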